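/- Let d ∈ ℕ and β, ε > 0, and let B_β = {x ∈ ℝ^d : ‖x‖₁ ≤ β} denote the ball of radius β in ℝ^d with respect to the L¹ norm. Then the covering number of B_β at scale ε with respect to the Euclidean (L²) norm satisfies log N(B_β, ε, ‖·‖₂) ≤ ⌈β²/ε²⌉ · log(2d). -/

import Mathlib

open Finset

-- Fubini-type identity for a product measure on `Fin k → σ`.
lemma maurey_fubini_pair {σ : Type*} [Fintype σ] {k : ℕ}
    (p f : σ → ℝ) (hp1 : ∑ s, p s = 1) (j l : Fin k) :
    ∑ t : Fin k → σ, (∏ j', p (t j')) * (f (t j) * f (t l)) =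
      if j = l then ∑ s, p s * f s ^ 2 else (∑ s, p s * f s) ^ 2 := by
  classical
  set F : Fin k → σ → ℝ := fun j' s =>
    p s * ((if j' = j then f s else 1) * (if j' = l then f s else 1)) with hF
  have key : ∀ t : Fin k → σ,
      (∏ j', p (t j')) * (f (t j) * f (t l)) = ∏ j', F j' (t j') := by
    intro t
    simp only [hF, Finset.prod_mul_distrib, Finset.prod_ite_eq', Finset.mem_univ, if_true]
  rw [Finset.sum_congr rfl (fun t _ => key t), ← Fintype.prod_sum]
  by_cases hjl : j = l
  · subst hjl
    have h1 : ∀ j' : Fin k, ∑ s, F j' s = if j' = j then ∑ s, p s * f s ^ 2 else 1 := by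
      intro j'
      by_cases h : j' = j <;> simp [hF, h, hp1, sq]
    rw [Finset.prod_congr rfl (fun j' _ => h1 j')]
    simp [Finset.prod_ite_eq']
  · have hlj : ¬ l = j := fun h => hjl h.symm
    have h1 : ∀ j' : Fin k, ∑ s, F j' s =
        (if j' = j then ∑ s, p s * f s else 1) * (if j' = l then ∑ s, p s * f s else 1) := by
      intro j'
      by_cases h1 : j' = j <;> by_cases h2 : j' = l
      · exact absurd (h1.symm.trans h2) hjl
      · simp [hF, h1, h2, hjl, hlj]
      · simp [hF, h1, h2, hjl, hlj]
      · simp [hF, h1, h2, hp1]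
    rw [Finset.prod_congr rfl (fun j' _ => h1 j'), Finset.prod_mul_distrib]
    simp [Finset.prod_ite_eq', hjl, sq]

-- Maurey's empirical method.
lemma maurey {σ : Type*} [Fintype σ] {d k : ℕ} (hk : 0 < k)
    (p : σ → ℝ) (a : σ → Fin d → ℝ) (x : Fin d → ℝ) (β : ℝ)
    (hp0 : ∀ s, 0 ≤ p s) (hp1 : ∑ s, p s = 1)
    (hmean : ∀ i, ∑ s, p s * a s i = x i)
    (hnorm : ∀ s, ∑ i, (a s i) ^ 2 ≤ β ^ 2) :
    ∃ t : Fin k → σ, ∑ i, (x i - (∑ j, a (t j) i) / k) ^ 2 ≤ β ^ 2 / k := by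
  classical
  have hkpos : (0 : ℝ) < k := Nat.cast_pos.mpr hk
  have hk' : (k : ℝ) ≠ 0 := hkpos.ne'
  set W : (Fin k → σ) → ℝ := fun t => ∏ j, p (t j) with hWdef
  set Q : (Fin k → σ) → ℝ := fun t => ∑ i, (x i - (∑ j, a (t j) i) / k) ^ 2 with hQdef
  have hW0 : ∀ t, 0 ≤ W t := fun t => Finset.prod_nonneg fun j _ => hp0 (t j)
  have hW1 : ∑ t, W t = 1 := by
    rw [hWdef, ← Fintype.prod_sum]
    simp [hp1]
  have hzero : ∀ i, ∑ s, p s * (x i - a s i) = 0 := by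
    intro i
    simp only [mul_sub]
    rw [Finset.sum_sub_distrib, ← Finset.sum_mul, hp1, hmean i]
    ring
  -- expand Q as a double sum
  have hQ : ∀ t, Q t = (∑ i, ∑ j, ∑ l, (x i - a (t j) i) * (x i - a (t l) i)) / (k : ℝ) ^ 2 := by
    intro t
    rw [hQdef, Finset.sum_div]
    refine Finset.sum_congr rfl fun i _ => ?_
    have h1 : x i - (∑ j, a (t j) i) / k = (∑ j, (x i - a (t j) i)) / k := by
      rw [Finset.sum_sub_distrib, Finset.sum_const]
      field_simp
      simp [mul_comm]
    rw [h1, div_pow, ← Finset.sum_mul_sum, sq]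
  have hE : ∑ t, W t * Q t ≤ β ^ 2 / k := by
    have e1 : ∀ t, W t * Q t =
        (∑ i, ∑ j, ∑ l, W t * ((x i - a (t j) i) * (x i - a (t l) i))) / (k : ℝ) ^ 2 := by
      intro t
      rw [hQ t, ← mul_div_assoc]
      congr 1
      simp only [Finset.mul_sum]
    have step : ∑ t, W t * Q t =
        (∑ i, ∑ j : Fin k, ∑ l : Fin k,
          ∑ t : Fin k → σ, W t * ((x i - a (t j) i) * (x i - a (t l) i))) / (k : ℝ) ^ 2 := by
      rw [Finset.sum_congr rfl (fun t _ => e1 t), ← Finset.sum_div]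
      congr 1
      rw [Finset.sum_comm]
      refine Finset.sum_congr rfl fun i _ => ?_
      rw [Finset.sum_comm]
      refine Finset.sum_congr rfl fun j _ => ?_
      rw [Finset.sum_comm]
    rw [step]
    have inner : ∀ (i : Fin d) (j l : Fin k),
        ∑ t : Fin k → σ, W t * ((x i - a (t j) i) * (x i - a (t l) i)) =
          if j = l then ∑ s, p s * (x i - a s i) ^ 2 else 0 := by
      intro i j l
      rw [hWdef, maurey_fubini_pair p (fun s => x i - a s i) hp1 j l]
      by_cases h : j = l <;> simp [h, hzero i]
    have step2 : (∑ i, ∑ j : Fin k, ∑ l : Fin k,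
          ∑ t : Fin k → σ, W t * ((x i - a (t j) i) * (x i - a (t l) i)))
        = (k : ℝ) * ∑ s, p s * ∑ i, (x i - a s i) ^ 2 := by
      rw [Finset.sum_congr rfl (fun i _ => Finset.sum_congr rfl fun j _ =>
        Finset.sum_congr rfl fun l _ => inner i j l)]
      have h2 : ∀ i : Fin d, ∑ j : Fin k, ∑ l : Fin k,
          (if j = l then ∑ s, p s * (x i - a s i) ^ 2 else 0)
            = (k : ℝ) * ∑ s, p s * (x i - a s i) ^ 2 := by
        intro i
        simp [Finset.sum_ite_eq, Finset.mul_sum]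
      rw [Finset.sum_congr rfl (fun i _ => h2 i), ← Finset.mul_sum]
      congr 1
      rw [Finset.sum_comm]
      exact Finset.sum_congr rfl fun s _ => by rw [Finset.mul_sum]
    rw [step2]
    -- bound ∑ s, p s * ∑ i, (x i - a s i)^2 ≤ β^2
    have hD : ∑ s, p s * ∑ i, (x i - a s i) ^ 2 ≤ β ^ 2 := by
      have expand : ∀ s, ∑ i, (x i - a s i) ^ 2 =
          (∑ i, (a s i) ^ 2) - 2 * (∑ i, x i * a s i) + ∑ i, (x i) ^ 2 := by
        intro s
        have h3 : ∀ i : Fin d, (x i - a s i) ^ 2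
            = (a s i) ^ 2 - 2 * (x i * a s i) + (x i) ^ 2 := fun i => by ring
        rw [Finset.sum_congr rfl fun i _ => h3 i, Finset.sum_add_distrib,
          Finset.sum_sub_distrib, ← Finset.mul_sum]
      have hmid : ∑ s, p s * ∑ i, x i * a s i = ∑ i, (x i) ^ 2 := by
        have h4 : ∑ s, p s * ∑ i, x i * a s i = ∑ i, x i * ∑ s, p s * a s i := by
          simp only [Finset.mul_sum]
          rw [Finset.sum_comm]
          exact Finset.sum_congr rfl fun i _ => Finset.sum_congr rfl fun s _ => by ring
        rw [h4]
        exact Finset.sum_congr rfl fun i _ => by rw [hmean i, sq]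
      have hx2 : 0 ≤ ∑ i, (x i) ^ 2 := Finset.sum_nonneg fun i _ => sq_nonneg _
      have hsplit : ∑ s, p s * ∑ i, (x i - a s i) ^ 2
          = (∑ s, p s * ∑ i, (a s i) ^ 2) - 2 * (∑ s, p s * ∑ i, x i * a s i)
            + (∑ s, p s) * ∑ i, (x i) ^ 2 := by
        have h5 : ∀ s, p s * ∑ i, (x i - a s i) ^ 2
            = p s * (∑ i, (a s i) ^ 2) - 2 * (p s * ∑ i, x i * a s i)
              + p s * ∑ i, (x i) ^ 2 := fun s => by rw [expand s]; ring
        rw [Finset.sum_congr rfl fun s _ => h5 s, Finset.sum_add_distrib,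
          Finset.sum_sub_distrib, ← Finset.mul_sum, ← Finset.sum_mul]
      have hfirst : ∑ s, p s * ∑ i, (a s i) ^ 2 ≤ β ^ 2 := by
        calc ∑ s, p s * ∑ i, (a s i) ^ 2 ≤ ∑ s, p s * β ^ 2 :=
              Finset.sum_le_sum fun s _ => mul_le_mul_of_nonneg_left (hnorm s) (hp0 s)
          _ = β ^ 2 := by rw [← Finset.sum_mul, hp1, one_mul]
      rw [hsplit, hmid, hp1]
      nlinarith [hfirst, hx2]
    calc ((k : ℝ) * ∑ s, p s * ∑ i, (x i - a s i) ^ 2) / (k : ℝ) ^ 2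
        = (∑ s, p s * ∑ i, (x i - a s i) ^ 2) / k := by field_simp
      _ ≤ β ^ 2 / k := by gcongr
  -- conclude by a first-moment argument
  by_contra hcon
  push_neg at hcon
  have hex : ∃ t : Fin k → σ, 0 < W t := by
    by_contra hall
    push_neg at hall
    have : ∑ t, W t ≤ 0 := Finset.sum_nonpos fun t _ => hall t
    linarith [hW1]
  obtain ⟨t0, ht0⟩ := hex
  have hlt : ∑ t, W t * (β ^ 2 / (k : ℝ)) < ∑ t, W t * Q t := by
    apply Finset.sum_lt_sum
    · exact fun t _ => mul_le_mul_of_nonneg_left (hcon t).le (hW0 t)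
    · exact ⟨t0, Finset.mem_univ t0, mul_lt_mul_of_pos_left (hcon t0) ht0⟩
  rw [← Finset.sum_mul, hW1, one_mul] at hlt
  linarith [hE]

/-- The `L¹`-ball of radius `β` in `ℝ^d` admits an `ε`-cover in the Euclidean
norm whose log-cardinality is at most `⌈β²/ε²⌉ · log(2d)`. -/
theorem covering_l1_ball_in_l2
    (d : ℕ) (β ε : ℝ) (hβ : 0 < β) (hε : 0 < ε) :
    ∃ 𝓒 : Finset (Fin d → ℝ),
      Real.log (𝓒.card) ≤ (⌈β ^ 2 / ε ^ 2⌉₊ : ℝ) * Real.log (2 * d) ∧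
      ∀ x : Fin d → ℝ, (∑ i, |x i|) ≤ β →
        ∃ c ∈ 𝓒, Real.sqrt (∑ i, (x i - c i) ^ 2) ≤ ε := by
  classical
  rcases Nat.eq_zero_or_pos d with hd | hd
  · subst hd
    refine ⟨{fun _ => 0}, ?_, ?_⟩
    · simp
    · intro x _
      refine ⟨fun _ => 0, Finset.mem_singleton_self _, ?_⟩
      simp only [Finset.univ_eq_empty, Finset.sum_empty, Real.sqrt_zero]
      exact hε.le
  · set k := ⌈β ^ 2 / ε ^ 2⌉₊ with hkdef
    have hk : 0 < k := Nat.ceil_pos.mpr (by positivity)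
    have hkR : (0 : ℝ) < k := Nat.cast_pos.mpr hk
    set A : Fin d × Bool → Fin d → ℝ :=
      fun s i' => if i' = s.1 then (if s.2 then β else -β) else 0 with hA
    set 𝓒 : Finset (Fin d → ℝ) :=
      (Finset.univ : Finset (Fin k → Fin d × Bool)).image
        (fun t => fun i => (∑ j, A (t j) i) / k) with hC
    have hne : Nonempty (Fin d × Bool) := ⟨(⟨0, hd⟩, true)⟩
    refine ⟨𝓒, ?_, ?_⟩
    · have hcard : 𝓒.card ≤ (2 * d) ^ k := by
        calc 𝓒.card ≤ (Finset.univ : Finset (Fin k → Fin d × Bool)).card :=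
              Finset.card_image_le
          _ = (2 * d) ^ k := by
              simp [Finset.card_univ, Fintype.card_fun, Fintype.card_prod, mul_comm]
      have hpos : 0 < 𝓒.card :=
        Finset.card_pos.mpr (Finset.Nonempty.image Finset.univ_nonempty _)
      calc Real.log 𝓒.card ≤ Real.log (((2 * d) ^ k : ℕ) : ℝ) :=
            Real.log_le_log (by exact_mod_cast hpos) (by exact_mod_cast hcard)
        _ = (k : ℝ) * Real.log (2 * d) := by
            push_cast
            rw [Real.log_pow]
    · intro x hx
      set S := ∑ i, |x i| with hS
      set i0 : Fin d := ⟨0, hd⟩ with hi0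
      set p : Fin d × Bool → ℝ := fun s =>
        (|x s.1| + (if s.2 then x s.1 else -x s.1)) / (2 * β)
          + (if s.1 = i0 then (β - S) / (2 * β) else 0) with hp
      have hp0 : ∀ s, 0 ≤ p s := by
        rintro ⟨i, b⟩
        apply add_nonneg
        · apply div_nonneg _ (by linarith)
          cases b
          · simp only [Bool.false_eq_true, if_false]
            have := le_abs_self (x i); linarith [abs_nonneg (x i)]
          · simp only [if_true]
            have := neg_abs_le (x i); linarith [abs_nonneg (x i)]
        · split_ifs
          · apply div_nonneg (by linarith) (by linarith)
          · exact le_refl 0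
      have hp1 : ∑ s, p s = 1 := by
        rw [Fintype.sum_prod_type]
        have hb : ∀ i : Fin d, ∑ b : Bool, p (i, b)
            = |x i| / β + (if i = i0 then (β - S) / β else 0) := by
          intro i
          rw [Fintype.sum_bool]
          by_cases h : i = i0 <;>
            · simp [hp, h]
              field_simp
              ring
        rw [Finset.sum_congr rfl fun i _ => hb i, Finset.sum_add_distrib]
        rw [Finset.sum_ite_eq' Finset.univ i0 (fun _ => (β - S) / β)]
        rw [← Finset.sum_div, ← hS]
        simp only [Finset.mem_univ, if_true]
        field_simp
        ring
      have hmean : ∀ i', ∑ s, p s * A s i' = x i' := by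
        intro i'
        rw [Fintype.sum_prod_type]
        have hb : ∀ i : Fin d, ∑ b : Bool, p (i, b) * A (i, b) i'
            = if i' = i then x i else 0 := by
          intro i
          rw [Fintype.sum_bool]
          by_cases h : i' = i
          · simp only [hp, hA, h, if_true, if_false, Bool.false_eq_true]
            field_simp
            ring
          · simp [hA, h]
        rw [Finset.sum_congr rfl fun i _ => hb i, Finset.sum_ite_eq]
        simp
      have hnorm : ∀ s, ∑ i, (A s i) ^ 2 ≤ β ^ 2 := by
        rintro ⟨i1, b⟩
        have h6 : ∀ i : Fin d, (A (i1, b) i) ^ 2 = if i = i1 then β ^ 2 else 0 := by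
          intro i
          by_cases h : i = i1 <;> cases b <;> simp [hA, h] <;> ring
        rw [Finset.sum_congr rfl fun i _ => h6 i,
          Finset.sum_ite_eq' Finset.univ i1 (fun _ => β ^ 2)]
        simp
      obtain ⟨t, ht⟩ := maurey hk p A x β hp0 hp1 hmean hnorm
      refine ⟨fun i => (∑ j, A (t j) i) / k, ?_, ?_⟩
      · rw [hC]
        exact Finset.mem_image_of_mem _ (Finset.mem_univ t)
      · have h2 : β ^ 2 / ε ^ 2 ≤ (k : ℝ) := Nat.le_ceil _
        have h1 : β ^ 2 / (k : ℝ) ≤ ε ^ 2 := by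
          rw [div_le_iff₀ hkR]
          rw [div_le_iff₀ (by positivity)] at h2
          linarith
        calc Real.sqrt (∑ i, (x i - (∑ j, A (t j) i) / k) ^ 2)
            ≤ Real.sqrt (ε ^ 2) := Real.sqrt_le_sqrt (ht.trans h1)
          _ = ε := Real.sqrt_sq hε.le
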